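/- Let Ω be a countably infinite set and S = Sym(Ω). Then S_(A) ≈ S_(B) for all A, B ∈ 𝒬; that is, the subgroups determined by partitions of Ω with a common finite bound on block sizes and infinitely many non-singleton blocks are mutually ≈-equivalent. -/

import Mathlib

open scoped Cardinal ENNReal

universe u

variable {Ω : Type u}

/-- The pointwise stabilizer of a set `s` inside a subgroup `G` of `Sym(Ω)`. -/
def pstab (G : Subgroup (Equiv.Perm Ω)) (s : Set Ω) : Subgroup (Equiv.Perm Ω) where
  carrier := {g | g ∈ G ∧ ∀ x ∈ s, g x = x}
  one_mem' := ⟨G.one_mem, fun _ _ => rfl⟩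
  mul_mem' := by
    rintro a b ⟨haG, ha⟩ ⟨hbG, hb⟩
    refine ⟨G.mul_mem haG hbG, fun x hx => ?_⟩
    simp [Equiv.Perm.mul_apply, hb x hx, ha x hx]
  inv_mem' := by
    rintro a ⟨haG, ha⟩
    refine ⟨G.inv_mem haG, fun x hx => ?_⟩
    conv_lhs => rw [← ha x hx]
    exact a.symm_apply_apply x

/-- For a family `A` of subsets of `Ω`, the subgroup of permutations carrying each
member of `A` onto itself. -/
def SAgrp (A : Set (Set Ω)) : Subgroup (Equiv.Perm Ω) where
  carrier := {f | ∀ s ∈ A, (f : Ω → Ω) '' s = s}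
  one_mem' := fun s _ => by simp
  mul_mem' := by
    intro a b ha hb s hs
    rw [Equiv.Perm.coe_mul, Set.image_comp, hb s hs, ha s hs]
  inv_mem' := by
    intro a ha s hs
    conv_lhs => rw [← ha s hs]
    rw [← Set.image_comp]
    simp

/-- `G₁ ≼_κ G₂` : there is a set `U` of permutations of cardinality `< κ` with
`G₁ ≤ ⟨G₂ ∪ U⟩`. -/
def Prec (κ : Cardinal.{u}) (G₁ G₂ : Subgroup (Equiv.Perm Ω)) : Prop :=
  ∃ U : Set (Equiv.Perm Ω), #U < κ ∧
    G₁ ≤ Subgroup.closure ((G₂ : Set (Equiv.Perm Ω)) ∪ U)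

/-- `G₁ ≈_κ G₂`. -/
def CApprox (κ : Cardinal.{u}) (G₁ G₂ : Subgroup (Equiv.Perm Ω)) : Prop :=
  Prec κ G₁ G₂ ∧ Prec κ G₂ G₁

/-- `G₁ ≼ G₂` (i.e. `≼_{ℵ₀}`, with `U` finite). -/
def PrecF (G₁ G₂ : Subgroup (Equiv.Perm Ω)) : Prop :=
  ∃ U : Set (Equiv.Perm Ω), U.Finite ∧
    G₁ ≤ Subgroup.closure ((G₂ : Set (Equiv.Perm Ω)) ∪ U)

/-- `G₁ ≈ G₂` (i.e. `≈_{ℵ₀}`). -/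
def ApproxF (G₁ G₂ : Subgroup (Equiv.Perm Ω)) : Prop :=
  PrecF G₁ G₂ ∧ PrecF G₂ G₁

/-- A generalized metric: a `[0,∞]`-valued metric. -/
structure IsGenMetric (d : Ω → Ω → ℝ≥0∞) : Prop where
  eq_zero_iff : ∀ α β, d α β = 0 ↔ α = β
  symm : ∀ α β, d α β = d β α
  triangle : ∀ α β γ, d α γ ≤ d α β + d β γ

/-- Open ball for a generalized metric. -/
def gball (d : Ω → Ω → ℝ≥0∞) (α : Ω) (r : ℝ≥0∞) : Set Ω := {β | d α β < r}

/-- `(Ω, d)` is `κ`-uncrowded: every ball of finite radius has `< κ` elements. -/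
def Uncrowded (κ : Cardinal.{u}) (d : Ω → Ω → ℝ≥0∞) : Prop :=
  ∀ (α : Ω) (r : ℝ≥0∞), r < ⊤ → #(gball d α r) < κ

/-- `(Ω, d)` is uniformly `κ`-uncrowded. -/
def UnifUncrowded (κ : Cardinal.{u}) (d : Ω → Ω → ℝ≥0∞) : Prop :=
  ∀ r : ℝ≥0∞, r < ⊤ → ∃ lam : Cardinal.{u}, lam < κ ∧ ∀ α : Ω, #(gball d α r) ≤ lam

/-- `g` is bounded with respect to `d` : `‖g‖_d = ⨆ α, d α (αg) < ∞`. -/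
def BoundedPerm (d : Ω → Ω → ℝ≥0∞) (g : Equiv.Perm Ω) : Prop :=
  (⨆ α : Ω, d α (g α)) < ⊤

/-- The function topology on `Sym(Ω)`: induced from the product topology on `Ω → Ω`
with `Ω` discrete. -/
def permTop (Ω : Type u) : TopologicalSpace (Equiv.Perm Ω) :=
  TopologicalSpace.induced (fun g : Equiv.Perm Ω => (g : Ω → Ω))
    (@Pi.topologicalSpace Ω (fun _ => Ω) (fun _ => ⊥))

/-- `G` is closed in `Sym(Ω)` in the function topology. -/
def FTClosed (G : Subgroup (Equiv.Perm Ω)) : Prop :=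
  @IsClosed _ (permTop Ω) (G : Set (Equiv.Perm Ω))

/-- `G` is discrete in the function topology. -/
def FTDiscrete (G : Subgroup (Equiv.Perm Ω)) : Prop :=
  @DiscreteTopology G
    (TopologicalSpace.induced (fun x : G => (x : Equiv.Perm Ω)) (permTop Ω))

/-- The orbit of `α` under a subgroup `H ≤ Sym(Ω)`. -/
def orb (H : Subgroup (Equiv.Perm Ω)) (α : Ω) : Set Ω := {β | ∃ g ∈ H, g α = β}

/-- A partition of `Ω`: a set of disjoint nonempty subsets with union `Ω`. -/
def IsPartition (A : Set (Set Ω)) : Prop :=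
  (∀ s ∈ A, s.Nonempty) ∧ A.PairwiseDisjoint id ∧ ⋃₀ A = Set.univ

/-- `A ∈ 𝒫`: a partition of `Ω` into finite subsets of unbounded cardinality. -/
def MemP (A : Set (Set Ω)) : Prop :=
  IsPartition A ∧ (∀ s ∈ A, s.Finite) ∧ ∀ n : ℕ, ∃ s ∈ A, (n : ℕ∞) < s.encard

/-- `A ∈ 𝒬`: a partition of `Ω` with a common finite bound on the cardinalities of
its members, infinitely many of which have more than one element. -/
def MemQ (A : Set (Set Ω)) : Prop :=
  IsPartition A ∧ (∃ n : ℕ, ∀ s ∈ A, s.encard ≤ (n : ℕ∞)) ∧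
    {s | s ∈ A ∧ 1 < s.encard}.Infinite

/-- The subgroup `FN(Ω,d)` of permutations of finite norm with respect to a
generalized metric `d`. -/
def FN (d : Ω → Ω → ℝ≥0∞) (hd : IsGenMetric d) : Subgroup (Equiv.Perm Ω) where
  carrier := {g | (⨆ α : Ω, d α (g α)) < ⊤}
  one_mem' := by
    have h : (⨆ α : Ω, d α ((1 : Equiv.Perm Ω) α)) ≤ 0 :=
      iSup_le fun α => le_of_eq ((hd.eq_zero_iff α ((1 : Equiv.Perm Ω) α)).2 rfl)
    exact lt_of_le_of_lt h (by simp)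
  mul_mem' := by
    intro a b ha hb
    have h : (⨆ α : Ω, d α ((a * b) α)) ≤
        (⨆ α : Ω, d α (b α)) + (⨆ α : Ω, d α (a α)) := by
      refine iSup_le fun α => ?_
      calc d α ((a * b) α) = d α (a (b α)) := by rw [Equiv.Perm.mul_apply]
        _ ≤ d α (b α) + d (b α) (a (b α)) := hd.triangle _ _ _
        _ ≤ _ := add_le_add (le_iSup (fun α : Ω => d α (b α)) α)
              (le_iSup (fun β : Ω => d β (a β)) (b α))
    exact lt_of_le_of_lt h (ENNReal.add_lt_top.2 ⟨hb, ha⟩)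
  inv_mem' := by
    intro a ha
    have h : (⨆ α : Ω, d α (a⁻¹ α)) ≤ ⨆ β : Ω, d β (a β) := by
      refine iSup_le fun α => ?_
      have e : d α (a⁻¹ α) = d (a⁻¹ α) (a (a⁻¹ α)) := by
        rw [show a (a⁻¹ α) = α from a.apply_symm_apply α]; exact hd.symm _ _
      rw [e]
      exact le_iSup (fun β : Ω => d β (a β)) (a⁻¹ α)
    exact lt_of_le_of_lt h ha

namespace BS
open Equiv Set Function
open Equiv Set Function

def IsPairSys (P : Set (Set Ω)) : Prop :=
  (∀ p ∈ P, p.encard = 2) ∧ P.PairwiseDisjoint id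

lemma pd_eq {A : Set (Set Ω)} (h : A.PairwiseDisjoint id) {s t : Set Ω}
    (hs : s ∈ A) (ht : t ∈ A) {x : Ω} (hxs : x ∈ s) (hxt : x ∈ t) : s = t := by
  by_contra hne
  exact absurd hxt ((Set.disjoint_left.1 (h hs ht hne)) hxs)

lemma equiv_of_ci [Countable Ω] {s t : Set Ω} (hs : s.Infinite) (ht : t.Infinite) :
    Nonempty (s ≃ t) := by
  obtain ⟨ds⟩ := Set.countable_infinite_iff_nonempty_denumerable.1 ⟨s.to_countable, hs⟩
  obtain ⟨dt⟩ := Set.countable_infinite_iff_nonempty_denumerable.1 ⟨t.to_countable, ht⟩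
  exact ⟨(@Denumerable.eqv s ds).trans (@Denumerable.eqv t dt).symm⟩

lemma exists_pairmap [Countable Ω] {P Q : Set (Set Ω)}
    (hP : IsPairSys P) (hQ : IsPairSys Q)
    (hPc : (⋃₀ P)ᶜ.Infinite) (hQi : Q.Infinite) :
    ∃ φ : Equiv.Perm Ω, ∀ p ∈ P, (φ : Ω → Ω) '' p ∈ Q := by
  classical
  -- representatives & pair decompositions
  have haP : ∀ p : P, ∃ a b : Ω, a ≠ b ∧ (p : Set Ω) = {a, b} := by
    rintro ⟨p, hp⟩
    obtain ⟨a, b, hab, h⟩ := Set.encard_eq_two.1 (hP.1 p hp)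
    exact ⟨a, b, hab, h⟩
  choose aP bP habP hsetP using haP
  have haQ : ∀ q : Q, ∃ a b : Ω, a ≠ b ∧ (q : Set Ω) = {a, b} := by
    rintro ⟨q, hq⟩
    obtain ⟨a, b, hab, h⟩ := Set.encard_eq_two.1 (hQ.1 q hq)
    exact ⟨a, b, hab, h⟩
  choose aQ bQ habQ hsetQ using haQ
  have memaP : ∀ p : P, aP p ∈ (p : Set Ω) := fun p => by rw [hsetP p]; exact Set.mem_insert _ _
  have membP : ∀ p : P, bP p ∈ (p : Set Ω) := fun p => by
    rw [hsetP p]; exact Set.mem_insert_iff.2 (Or.inr rfl)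
  have memaQ : ∀ q : Q, aQ q ∈ (q : Set Ω) := fun q => by rw [hsetQ q]; exact Set.mem_insert _ _
  have membQ : ∀ q : Q, bQ q ∈ (q : Set Ω) := fun q => by
    rw [hsetQ q]; exact Set.mem_insert_iff.2 (Or.inr rfl)
  -- countability of P and Q
  have hPcnt : Countable P := by
    have : Function.Injective (fun p : P => aP p) := by
      intro p1 p2 h
      simp only at h
      have h2 : aP p1 ∈ (p2 : Set Ω) := by rw [h]; exact memaP p2
      exact Subtype.ext (pd_eq hP.2 p1.2 p2.2 (memaP p1) h2)
    exact this.countable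
  have hQcnt : Countable Q := by
    have : Function.Injective (fun q : Q => aQ q) := by
      intro q1 q2 h
      simp only at h
      have h2 : aQ q1 ∈ (q2 : Set Ω) := by rw [h]; exact memaQ q2
      exact Subtype.ext (pd_eq hQ.2 q1.2 q2.2 (memaQ q1) h2)
    exact this.countable
  have hQinf : Infinite Q := Set.infinite_coe_iff.2 hQi
  obtain ⟨dQ⟩ : Nonempty (Denumerable Q) := nonempty_denumerable_iff.2 ⟨hQcnt, hQinf⟩
  let eQ : ℕ ≃ Q := (@Denumerable.eqv Q dQ).symm
  obtain ⟨ιP, hιP⟩ := Countable.exists_injective_nat P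
  -- the pair assignment
  let Φ : P → Q := fun p => eQ (2 * ιP p + 1)
  have hΦinj : Function.Injective Φ := by
    intro p1 p2 h
    have h2 := eQ.injective h
    exact hιP (by omega)
  -- complement of selected Q-pairs
  let T' : Set Ω := ⋃ p : P, ((Φ p : Set Ω))
  have hqT' : ∀ q : Q, (∀ p : P, Φ p ≠ q) → ∀ x ∈ (q : Set Ω), x ∉ T' := by
    intro q hq x hxq hxT'
    obtain ⟨U, ⟨p, rfl⟩, hxU⟩ := hxT'
    have : ((Φ p : Q) : Set Ω) = (q : Set Ω) := pd_eq hQ.2 (Φ p).2 q.2 hxU hxq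
    exact hq p (Subtype.ext this)
  have hT'c : T'ᶜ.Infinite := by
    refine Set.infinite_of_injective_forall_mem
      (f := fun m : ℕ => aQ (eQ (2 * m))) ?_ ?_
    · intro m1 m2 h
      simp only at h
      have h2 : aQ (eQ (2 * m1)) ∈ ((eQ (2 * m2) : Q) : Set Ω) := by rw [h]; exact memaQ _
      have h3 : ((eQ (2*m1) : Q) : Set Ω) = ((eQ (2*m2) : Q) : Set Ω) :=
        pd_eq hQ.2 (eQ (2*m1)).2 (eQ (2*m2)).2 (memaQ _) h2
      have := eQ.injective (Subtype.ext h3)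
      omega
    · intro m
      apply hqT' (eQ (2 * m)) _ _ (memaQ _)
      intro p hp
      have h2 : 2 * ιP p + 1 = 2 * m := eQ.injective hp
      omega
  -- glue bijection on complements
  obtain ⟨ec⟩ := equiv_of_ci hPc hT'c
  -- the global map
  have pcex : ∀ x, x ∈ ⋃₀ P → ∃ p : P, x ∈ (p : Set Ω) := by
    intro x hx
    obtain ⟨t, ht, hxt⟩ := Set.mem_sUnion.1 hx
    exact ⟨⟨t, ht⟩, hxt⟩
  classical
  let pc : ∀ x, x ∈ ⋃₀ P → P := fun x hx => (pcex x hx).choose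
  have hpc : ∀ x hx, x ∈ ((pc x hx : P) : Set Ω) := fun x hx => (pcex x hx).choose_spec
  let g : Ω → Ω := fun x =>
    if hx : x ∈ ⋃₀ P then
      (if x = aP (pc x hx) then aQ (Φ (pc x hx)) else bQ (Φ (pc x hx)))
    else (ec ⟨x, hx⟩ : Ω)
  -- basic facts about g
  have hg_in : ∀ x (hx : x ∈ ⋃₀ P), g x ∈ ((Φ (pc x hx) : Q) : Set Ω) := by
    intro x hx
    simp only [g, dif_pos hx]
    by_cases h : x = aP (pc x hx)
    · rw [if_pos h]; exact memaQ _
    · rw [if_neg h]; exact membQ _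
  have hg_out : ∀ x (hx : x ∉ ⋃₀ P), g x = (ec ⟨x, hx⟩ : Ω) := by
    intro x hx; simp only [g, dif_neg hx]
  have hT'mem : ∀ p : P, ∀ y ∈ ((Φ p : Q) : Set Ω), y ∈ T' := by
    intro p y hy
    exact Set.mem_iUnion.2 ⟨p, hy⟩
  -- value of g on an explicit pair
  have hgaP : ∀ p : P, g (aP p) = aQ (Φ p) := by
    intro p
    have hx : aP p ∈ ⋃₀ P := Set.mem_sUnion.2 ⟨p, p.2, memaP p⟩
    have hpcp : pc (aP p) hx = p :=
      Subtype.ext (pd_eq hP.2 (pc (aP p) hx).2 p.2 (hpc _ hx) (memaP p))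
    simp only [g, dif_pos hx, hpcp, if_true, eq_self_iff_true]
  have hgbP : ∀ p : P, g (bP p) = bQ (Φ p) := by
    intro p
    have hx : bP p ∈ ⋃₀ P := Set.mem_sUnion.2 ⟨p, p.2, membP p⟩
    have hpcp : pc (bP p) hx = p :=
      Subtype.ext (pd_eq hP.2 (pc (bP p) hx).2 p.2 (hpc _ hx) (membP p))
    have hne : bP p ≠ aP p := (habP p).symm
    simp only [g, dif_pos hx, hpcp, if_neg hne]
  have hgbij : Function.Bijective g := by
    constructor
    · intro x1 x2 hg12
      by_cases h1 : x1 ∈ ⋃₀ P <;> by_cases h2 : x2 ∈ ⋃₀ P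
      · -- both inside
        have e1 := hg_in x1 h1
        have e2 := hg_in x2 h2
        rw [hg12] at e1
        have hqq : ((Φ (pc x1 h1) : Q) : Set Ω) = ((Φ (pc x2 h2) : Q) : Set Ω) :=
          pd_eq hQ.2 (Φ (pc x1 h1)).2 (Φ (pc x2 h2)).2 e1 e2
        have hpp : pc x1 h1 = pc x2 h2 := hΦinj (Subtype.ext hqq)
        set p := pc x1 h1 with hp1
        have hx1p : x1 ∈ ((p : P) : Set Ω) := hpc x1 h1
        have hx2p : x2 ∈ ((p : P) : Set Ω) := by rw [hpp]; exact hpc x2 h2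
        have hgx1 : g x1 = (if x1 = aP p then aQ (Φ p) else bQ (Φ p)) := by
          simp only [g, dif_pos h1, ← hp1]
        have hgx2 : g x2 = (if x2 = aP p then aQ (Φ p) else bQ (Φ p)) := by
          simp only [g, dif_pos h2, ← hpp]
        rw [hgx1, hgx2] at hg12
        have hmem1 := hsetP p ▸ hx1p
        have hmem2 := hsetP p ▸ hx2p
        by_cases c1 : x1 = aP p <;> by_cases c2 : x2 = aP p
        · rw [c1, c2]
        · rw [if_pos c1, if_neg c2] at hg12; exact absurd hg12 (habQ _)
        · rw [if_neg c1, if_pos c2] at hg12; exact absurd hg12.symm (habQ _)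
        · have hx1b : x1 = bP p := by
            rcases Set.mem_insert_iff.1 hmem1 with h | h
            · exact absurd h c1
            · exact h
          have hx2b : x2 = bP p := by
            rcases Set.mem_insert_iff.1 hmem2 with h | h
            · exact absurd h c2
            · exact h
          rw [hx1b, hx2b]
      · -- x1 in, x2 out : contradiction
        exfalso
        have e1 := hg_in x1 h1
        have e2 := hg_out x2 h2
        have hmem : g x1 ∈ T' := hT'mem _ _ e1
        rw [hg12, e2] at hmem
        exact (ec ⟨x2, h2⟩).2 hmem
      · exfalso
        have e1 := hg_in x2 h2
        have e2 := hg_out x1 h1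
        have hmem : g x2 ∈ T' := hT'mem _ _ e1
        rw [← hg12, e2] at hmem
        exact (ec ⟨x1, h1⟩).2 hmem
      · rw [hg_out x1 h1, hg_out x2 h2] at hg12
        exact congrArg Subtype.val (ec.injective (Subtype.ext hg12))
    · intro y
      by_cases hy : y ∈ T'
      · obtain ⟨U, ⟨p, rfl⟩, hyU⟩ := hy
        have hyU' : y ∈ ((Φ p : Q) : Set Ω) := hyU
        rw [hsetQ] at hyU'
        rcases Set.mem_insert_iff.1 hyU' with h | h
        · exact ⟨aP p, by rw [hgaP p, ← h]⟩
        · exact ⟨bP p, by rw [hgbP p]; rw [Set.mem_singleton_iff.1 h]⟩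
      · refine ⟨(ec.symm ⟨y, hy⟩ : Ω), ?_⟩
        have hx : ((ec.symm ⟨y, hy⟩ : Ω)) ∉ ⋃₀ P := (ec.symm ⟨y, hy⟩).2
        rw [hg_out _ hx]
        have : (⟨(ec.symm ⟨y, hy⟩ : Ω), hx⟩ : ((⋃₀ P)ᶜ : Set Ω)) = ec.symm ⟨y, hy⟩ :=
          Subtype.ext rfl
        rw [this, ec.apply_symm_apply]
  refine ⟨Equiv.ofBijective g hgbij, ?_⟩
  intro p hp
  have himg : (Equiv.ofBijective g hgbij : Ω → Ω) '' p = ((Φ ⟨p, hp⟩ : Q) : Set Ω) := by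
    have hco : (Equiv.ofBijective g hgbij : Ω → Ω) = g := rfl
    rw [hco]
    have hps : p = ({aP ⟨p, hp⟩, bP ⟨p, hp⟩} : Set Ω) := hsetP ⟨p, hp⟩
    conv_lhs => rw [hps]
    rw [Set.image_pair, hgaP, hgbP, hsetQ (Φ ⟨p, hp⟩)]
  rw [himg]
  exact (Φ ⟨p, hp⟩).2
open Equiv Set

lemma perm_image_eq {f : Equiv.Perm Ω} {s : Set Ω}
    (h1 : ∀ x ∈ s, f x ∈ s) (h2 : ∀ x ∈ s, f⁻¹ x ∈ s) :
    (f : Ω → Ω) '' s = s := by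
  apply Set.Subset.antisymm
  · rintro y ⟨x, hx, rfl⟩; exact h1 x hx
  · intro x hx
    exact ⟨f⁻¹ x, h2 x hx, f.apply_symm_apply x⟩

def SPgrp (P : Set (Set Ω)) : Subgroup (Equiv.Perm Ω) where
  carrier := {f | (∀ p ∈ P, (f : Ω → Ω) '' p = p) ∧ ∀ x ∉ ⋃₀ P, f x = x}
  one_mem' := ⟨fun p _ => by simp, fun x _ => rfl⟩
  mul_mem' := by
    rintro a b ⟨ha1, ha2⟩ ⟨hb1, hb2⟩
    refine ⟨fun p hp => ?_, fun x hx => ?_⟩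
    · rw [Equiv.Perm.coe_mul, Set.image_comp, hb1 p hp, ha1 p hp]
    · simp [Equiv.Perm.mul_apply, hb2 x hx, ha2 x hx]
  inv_mem' := by
    rintro a ⟨ha1, ha2⟩
    refine ⟨fun p hp => ?_, fun x hx => ?_⟩
    · conv_lhs => rw [← ha1 p hp, ← Set.image_comp]
      simp
    · conv_lhs => rw [← ha2 x hx]
      exact a.symm_apply_apply x

lemma mem_SPgrp {P : Set (Set Ω)} {f : Equiv.Perm Ω} :
    f ∈ SPgrp P ↔ (∀ p ∈ P, (f : Ω → Ω) '' p = p) ∧ ∀ x ∉ ⋃₀ P, f x = x := Iff.rfl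

lemma SPgrp_le_SAgrp {B : Set (Set Ω)} {P : Set (Set Ω)} (hB : IsPartition B)
    (hsub : ∀ p ∈ P, ∃ t ∈ B, p ⊆ t) : SPgrp P ≤ SAgrp B := by
  have key : ∀ g ∈ SPgrp P, ∀ t ∈ B, ∀ x ∈ t, g x ∈ t := by
    rintro g ⟨hg1, hg2⟩ t ht x hx
    by_cases hxu : x ∈ ⋃₀ P
    · obtain ⟨p, hp, hxp⟩ := hxu
      obtain ⟨t', ht', hpt'⟩ := hsub p hp
      have htt' : t = t' := pd_eq hB.2.1 ht ht' hx (hpt' hxp)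
      subst htt'
      have : g x ∈ (g : Ω → Ω) '' p := ⟨x, hxp, rfl⟩
      rw [hg1 p hp] at this
      exact hpt' this
    · rw [hg2 x hxu]; exact hx
  intro g hg t ht
  exact perm_image_eq (key g hg t ht) (key g⁻¹ ((SPgrp P).inv_mem hg) t ht)

lemma conj_mem [Countable Ω] {P Q : Set (Set Ω)} (hP : IsPairSys P) (hQ : IsPairSys Q)
    (hPc : (⋃₀ P)ᶜ.Infinite) (hQi : Q.Infinite) :
    ∃ φ : Equiv.Perm Ω, ∀ f ∈ SPgrp P, φ * f * φ⁻¹ ∈ SPgrp Q := by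
  obtain ⟨φ, hφ⟩ := exists_pairmap hP hQ hPc hQi
  refine ⟨φ, fun f hf => ?_⟩
  obtain ⟨hf1, hf2⟩ := mem_SPgrp.1 hf
  have hconj : ∀ y : Ω, (φ * f * φ⁻¹) y = φ (f (φ⁻¹ y)) := fun y => rfl
  have hkey : ∀ y : Ω, φ⁻¹ y ∉ ⋃₀ P → (φ * f * φ⁻¹) y = y := by
    intro y hy
    rw [hconj, hf2 _ hy, ← Equiv.Perm.mul_apply, mul_inv_cancel, Equiv.Perm.one_apply]
  refine mem_SPgrp.2 ⟨?_, ?_⟩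
  · intro q hq
    by_cases himg : ∃ p ∈ P, (φ : Ω → Ω) '' p = q
    · obtain ⟨p, hp, hpq⟩ := himg
      have hcoe : ((φ * f * φ⁻¹ : Equiv.Perm Ω) : Ω → Ω) '' q
          = (φ : Ω → Ω) '' ((f : Ω → Ω) '' ((φ⁻¹ : Equiv.Perm Ω) '' q)) := by
        rw [← Set.image_comp, ← Set.image_comp]
        rfl
      have h1 : ((φ⁻¹ : Equiv.Perm Ω) : Ω → Ω) '' q = p := by
        rw [← hpq]
        exact φ.symm_image_image p
      rw [hcoe, h1, hf1 p hp, hpq]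
    · have hfix : ∀ y ∈ q, (φ * f * φ⁻¹) y = y := by
        intro y hy
        apply hkey
        intro hcon
        obtain ⟨p', hp', hyp'⟩ := Set.mem_sUnion.1 hcon
        have hyim : y ∈ (φ : Ω → Ω) '' p' := ⟨φ⁻¹ y, hyp', φ.apply_symm_apply y⟩
        have hqeq : q = (φ : Ω → Ω) '' p' :=
          pd_eq hQ.2 hq (hφ p' hp') hy hyim
        exact himg ⟨p', hp', hqeq.symm⟩
      calc ((φ * f * φ⁻¹ : Equiv.Perm Ω) : Ω → Ω) '' q = id '' q :=
            Set.image_congr (fun y hy => hfix y hy)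
        _ = q := Set.image_id q
  · intro x hx
    apply hkey
    intro hcon
    obtain ⟨p', hp', hyp'⟩ := Set.mem_sUnion.1 hcon
    have : x ∈ (φ : Ω → Ω) '' p' := ⟨φ⁻¹ x, hyp', φ.apply_symm_apply x⟩
    exact hx (Set.mem_sUnion.2 ⟨_, hφ p' hp', this⟩)


lemma word_aux [DecidableEq Ω] {s : Set Ω} (hfin : s.Finite) (n : ℕ) :
    ∀ f : Equiv.Perm Ω, (∀ x ∈ s, f x ∈ s) → {x | x ∈ s ∧ f x ≠ x}.ncard ≤ n →
    ∃ l : List (Ω × Ω), (∀ z ∈ l, z.1 ∈ s ∧ z.2 ∈ s) ∧ l.length ≤ n ∧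
      ∀ y ∈ s, (l.map (fun z => Equiv.swap z.1 z.2)).prod y = f y := by
  induction n with
  | zero =>
    intro f hmap hcard
    have hMfin : {x | x ∈ s ∧ f x ≠ x}.Finite := hfin.subset (fun x hx => hx.1)
    have hM : {x | x ∈ s ∧ f x ≠ x} = ∅ := (Set.ncard_eq_zero hMfin).1 (Nat.le_zero.1 hcard)
    refine ⟨[], by simp, by simp, fun y hy => ?_⟩
    have : ¬ (y ∈ s ∧ f y ≠ y) := by rw [← Set.mem_setOf_eq (p := fun x => x ∈ s ∧ f x ≠ x), hM]; simp
    simp only [List.map_nil, List.prod_nil]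
    by_contra hne
    exact this ⟨hy, fun h => hne (by rw [Equiv.Perm.coe_one, id_eq, h])⟩
  | succ n ih =>
    intro f hmap hcard
    by_cases hM : {x | x ∈ s ∧ f x ≠ x} = ∅
    · refine ⟨[], by simp, by simp, fun y hy => ?_⟩
      have : ¬ (y ∈ s ∧ f y ≠ y) := by rw [← Set.mem_setOf_eq (p := fun x => x ∈ s ∧ f x ≠ x), hM]; simp
      simp only [List.map_nil, List.prod_nil]
      by_contra hne
      exact this ⟨hy, fun h => hne (by rw [Equiv.Perm.coe_one, id_eq, h])⟩
    · obtain ⟨x, hxs, hxf⟩ := Set.nonempty_iff_ne_empty.2 hM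
      set τ : Equiv.Perm Ω := Equiv.swap x (f x) with hτ
      set f' : Equiv.Perm Ω := τ * f with hf'
      have hMfin : {x | x ∈ s ∧ f x ≠ x}.Finite := hfin.subset (fun x hx => hx.1)
      have hmap' : ∀ y ∈ s, f' y ∈ s := by
        intro y hy
        have : f y ∈ s := hmap y hy
        simp only [hf', Equiv.Perm.mul_apply, hτ]
        rcases eq_or_ne (f y) x with h | h
        · rw [h, Equiv.swap_apply_left]; exact hmap x hxs
        · rcases eq_or_ne (f y) (f x) with h2 | h2
          · rw [h2, Equiv.swap_apply_right]; exact hxs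
          · rw [Equiv.swap_apply_of_ne_of_ne h h2]; exact this
      have hsub : {y | y ∈ s ∧ f' y ≠ y} ⊆ {y | y ∈ s ∧ f y ≠ y} \ {x} := by
        rintro y ⟨hys, hyf'⟩
        have hyf : f y ≠ y := by
          intro h
          apply hyf'
          simp only [hf', Equiv.Perm.mul_apply, h, hτ]
          rcases eq_or_ne y x with h1 | h1
          · exfalso; rw [h1] at h; exact hxf h
          · rcases eq_or_ne y (f x) with h2 | h2
            · exfalso
              have := f.injective (show f y = f x by rw [h, h2])
              rw [this] at h2
              exact hxf h2.symm
            · exact Equiv.swap_apply_of_ne_of_ne h1 h2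
        refine ⟨⟨hys, hyf⟩, ?_⟩
        intro hyx
        rw [Set.mem_singleton_iff.1 hyx] at hyf'
        apply hyf'
        simp [hf', hτ]
      have hcard' : {y | y ∈ s ∧ f' y ≠ y}.ncard ≤ n := by
        have h1 : {y | y ∈ s ∧ f' y ≠ y}.ncard ≤ ({y | y ∈ s ∧ f y ≠ y} \ {x}).ncard :=
          Set.ncard_le_ncard hsub hMfin.diff
        have h2 : ({y | y ∈ s ∧ f y ≠ y} \ {x}).ncard + 1 = {y | y ∈ s ∧ f y ≠ y}.ncard :=
          Set.ncard_diff_singleton_add_one ⟨hxs, hxf⟩ hMfin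
        omega
      obtain ⟨l', hl'1, hl'2, hl'3⟩ := ih f' hmap' hcard'
      refine ⟨(x, f x) :: l', ?_, by simpa using hl'2, ?_⟩
      · rintro z hz
        rcases List.mem_cons.1 hz with h | h
        · rw [h]; exact ⟨hxs, hmap x hxs⟩
        · exact hl'1 z h
      · intro y hy
        simp only [List.map_cons, List.prod_cons, Equiv.Perm.mul_apply]
        rw [hl'3 y hy]
        show τ (f' y) = f y
        simp [hf', hτ]
lemma swap_mem_of_mem [DecidableEq Ω] {s : Set Ω} {a b : Ω} (ha : a ∈ s) (hb : b ∈ s)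
    {y : Ω} (hy : y ∈ s) : Equiv.swap a b y ∈ s := by
  rcases eq_or_ne y a with h | h
  · rw [h, Equiv.swap_apply_left]; exact hb
  · rcases eq_or_ne y b with h2 | h2
    · rw [h2, Equiv.swap_apply_right]; exact ha
    · rw [Equiv.swap_apply_of_ne_of_ne h h2]; exact hy

def Rrel (s : Set Ω) (g g' : Equiv.Perm Ω) : Prop := ∀ y ∈ s, g y = g' y ∧ g y ∈ s

lemma Rrel.mul {s : Set Ω} {g1 g2 g1' g2' : Equiv.Perm Ω} (h1 : Rrel s g1 g1')
    (h2 : Rrel s g2 g2') : Rrel s (g1 * g2) (g1' * g2') := by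
  intro y hy
  obtain ⟨e2, m2⟩ := h2 y hy
  obtain ⟨e1, m1⟩ := h1 _ m2
  constructor
  · simp only [Equiv.Perm.mul_apply]
    rw [← e2, e1]
  · simp only [Equiv.Perm.mul_apply]
    exact m1

lemma Rrel_listprod {s : Set Ω} {ι : Type*} (L : List ι) (F F' : ι → Equiv.Perm Ω)
    (h : ∀ i ∈ L, Rrel s (F i) (F' i)) :
    Rrel s ((L.map F).prod) ((L.map F').prod) := by
  induction L with
  | nil => exact fun y hy => ⟨rfl, hy⟩
  | cons i L ih =>
    simp only [List.map_cons, List.prod_cons]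
    exact Rrel.mul (h i List.mem_cons_self) (ih fun i' hi' => h i' (List.mem_cons_of_mem _ hi'))

lemma fixlist_pt {x : Ω} (L : List (Equiv.Perm Ω)) (h : ∀ g ∈ L, g x = x) :
    L.prod x = x := by
  induction L with
  | nil => rfl
  | cons g L ih =>
    simp only [List.prod_cons, Equiv.Perm.mul_apply]
    rw [ih fun g' hg' => h g' (List.mem_cons_of_mem _ hg'), h g List.mem_cons_self]

lemma schedule [Countable Ω] {A : Set (Set Ω)} (hA : MemQ A) :
    ∃ (n : ℕ) (G : Fin n × Fin n → Bool → Set (Set Ω)),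
      (∀ j c, IsPairSys (G j c) ∧ (⋃₀ (G j c))ᶜ.Infinite ∧ (∀ p ∈ G j c, ∃ s ∈ A, p ⊆ s)) ∧
      SAgrp A ≤ Subgroup.closure
        (⋃ jc : (Fin n × Fin n) × Bool, (SPgrp (G jc.1 jc.2) : Set (Equiv.Perm Ω))) := by
  classical
  obtain ⟨hpart, ⟨n, hn⟩, hinf⟩ := hA
  set Big : Set (Set Ω) := {s | s ∈ A ∧ 1 < s.encard} with hBigdef
  have hBigA : ∀ s : Big, (s : Set Ω) ∈ A := fun s => s.2.1
  have hfinA : ∀ s ∈ A, s.Finite := fun s hs => Set.finite_of_encard_le_coe (hn s hs)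
  -- representatives of big blocks
  have hrepex : ∀ s : Big, ∃ x, x ∈ (s : Set Ω) := fun s => hpart.1 _ (hBigA s)
  choose rep hrep using hrepex
  have hrepinj : Function.Injective rep := by
    intro s1 s2 h
    have h2 : rep s1 ∈ (s2 : Set Ω) := by rw [h]; exact hrep s2
    exact Subtype.ext (pd_eq hpart.2.1 (hBigA s1) (hBigA s2) (hrep s1) h2)
  have hBigCnt : Countable Big := hrepinj.countable
  have hBigInf : Infinite Big := Set.infinite_coe_iff.2 hinf
  obtain ⟨dB⟩ : Nonempty (Denumerable Big) := nonempty_denumerable_iff.2 ⟨hBigCnt, hBigInf⟩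
  let eB : ℕ ≃ Big := (@Denumerable.eqv Big dB).symm
  let col : Big → Bool := fun s => decide (Even (eB.symm s))
  have hcol_eB : ∀ m : ℕ, col (eB m) = decide (Even m) := by
    intro m; simp only [col, Equiv.symm_apply_apply]
  -- uniqueness of big block containing a point
  have huniq : ∀ (t : Big) {x : Ω}, x ∈ (t : Set Ω) → ∀ (t' : Big), x ∈ (t' : Set Ω) → t = t' := by
    intro t x hx t' hx'
    exact Subtype.ext (pd_eq hpart.2.1 (hBigA t) (hBigA t') hx hx')
  -- injective labels within blocks
  have hlabel : ∀ s : Big, ∃ g : Ω → Fin (n + 1), Set.InjOn g (s : Set Ω) := by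
    intro s
    have hfin : (s : Set Ω).Finite := hfinA _ (hBigA s)
    haveI := hfin.fintype
    have hcard : Fintype.card (s : Set Ω) ≤ Fintype.card (Fin (n + 1)) := by
      rw [Fintype.card_fin]
      have h1 : (s : Set Ω).ncard ≤ n := by
        rw [Set.ncard_def]
        exact ENat.toNat_le_of_le_coe (hn _ (hBigA s))
      rw [← Nat.card_eq_fintype_card, Nat.card_coe_set_eq]
      omega
    obtain ⟨e⟩ := Function.Embedding.nonempty_of_card_le hcard
    refine ⟨fun x => if h : x ∈ (s : Set Ω) then e ⟨x, h⟩ else 0, ?_⟩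
    intro x hx y hy hxy
    simp only [dif_pos hx, dif_pos hy] at hxy
    exact Subtype.ext_iff.1 (e.injective (Fin.ext (by exact_mod_cast congrArg Fin.val hxy)))
  choose lab hlab using hlabel
  -- the fixed pair systems
  let G : Fin (n+1) × Fin (n+1) → Bool → Set (Set Ω) := fun j c =>
    {p | ∃ s : Big, col s = c ∧ ∃ a b : Ω, a ∈ (s : Set Ω) ∧ b ∈ (s : Set Ω) ∧ a ≠ b ∧
      lab s a = j.1 ∧ lab s b = j.2 ∧ p = {a, b}}
  have hGprops : ∀ j c, IsPairSys (G j c) ∧ (⋃₀ (G j c))ᶜ.Infinite ∧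
      (∀ p ∈ G j c, ∃ s ∈ A, p ⊆ s) := by
    intro j c
    refine ⟨⟨?_, ?_⟩, ?_, ?_⟩
    · rintro p ⟨s, hc, a, b, ha, hb, hab, hja, hjb, rfl⟩
      exact Set.encard_pair hab
    · rintro p1 ⟨s1, hc1, a1, b1, ha1, hb1, hab1, hja1, hjb1, rfl⟩
        p2 ⟨s2, hc2, a2, b2, ha2, hb2, hab2, hja2, hjb2, rfl⟩ hne
      show Disjoint ({a1, b1} : Set Ω) ({a2, b2} : Set Ω)
      rw [Set.disjoint_left]
      intro x hx1 hx2
      apply hne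
      have hxs1 : x ∈ (s1 : Set Ω) := by
        rcases hx1 with h | h
        · rw [h]; exact ha1
        · rw [Set.mem_singleton_iff.1 h]; exact hb1
      have hxs2 : x ∈ (s2 : Set Ω) := by
        rcases hx2 with h | h
        · rw [h]; exact ha2
        · rw [Set.mem_singleton_iff.1 h]; exact hb2
      have hss : s1 = s2 := huniq s1 hxs1 s2 hxs2
      subst hss
      have hA1 : a1 = a2 := hlab s1 ha1 ha2 (by rw [hja1, hja2])
      have hB1 : b1 = b2 := hlab s1 hb1 hb2 (by rw [hjb1, hjb2])
      rw [hA1, hB1]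
    · -- complement of union infinite
      refine Set.infinite_of_injective_forall_mem
        (f := fun m : ℕ => rep (eB (if c then 2 * m + 1 else 2 * m))) ?_ ?_
      · intro m1 m2 h
        simp only at h
        have := hrepinj h
        have := eB.injective this
        cases c <;> simp_all
      · intro m
        set t : Big := eB (if c then 2 * m + 1 else 2 * m) with ht
        show rep t ∈ (⋃₀ G j c)ᶜ
        have hcolt : col t ≠ c := by
          rw [ht, hcol_eB]
          cases c <;> simp [Nat.even_add_one, parity_simps]
        intro hmem
        obtain ⟨p, hp, hxp⟩ := Set.mem_sUnion.1 hmem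
        obtain ⟨s', hc', a, b, ha, hb, hab, hja, hjb, rfl⟩ := hp
        have hxs' : rep t ∈ (s' : Set Ω) := by
          rcases hxp with h | h
          · rw [h]; exact ha
          · rw [Set.mem_singleton_iff.1 h]; exact hb
        have : t = s' := huniq t (hrep t) s' hxs'
        rw [this] at hcolt
        exact hcolt hc'
    · rintro p ⟨s, hc, a, b, ha, hb, hab, hja, hjb, rfl⟩
      exact ⟨(s : Set Ω), hBigA s, by
        intro x hx
        rcases hx with h | h
        · rw [h]; exact ha
        · rw [Set.mem_singleton_iff.1 h]; exact hb⟩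
  refine ⟨n + 1, G, hGprops, ?_⟩
  -- === main inclusion ===
  intro f hf
  have hfA : ∀ s ∈ A, (f : Ω → Ω) '' s = s := hf
  -- words for big blocks
  have hword : ∀ s : Big, ∃ l : List (Ω × Ω),
      (∀ z ∈ l, z.1 ∈ (s : Set Ω) ∧ z.2 ∈ (s : Set Ω)) ∧ l.length ≤ n ∧
      ∀ y ∈ (s : Set Ω), (l.map (fun z => Equiv.swap z.1 z.2)).prod y = f y := by
    intro s
    have hfin : (s : Set Ω).Finite := hfinA _ (hBigA s)
    have hmap : ∀ x ∈ (s : Set Ω), f x ∈ (s : Set Ω) := by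
      intro x hx
      have h2 : f x ∈ (f : Ω → Ω) '' (s : Set Ω) := ⟨x, hx, rfl⟩
      rwa [hfA _ (hBigA s)] at h2
    apply word_aux hfin n f hmap
    have hsub : {x | x ∈ (s : Set Ω) ∧ f x ≠ x} ⊆ (s : Set Ω) := fun x hx => hx.1
    have hle := (Set.encard_mono hsub).trans (hn _ (hBigA s))
    rw [Set.ncard_def]
    exact ENat.toNat_le_of_le_coe hle
  choose w hwmem hwlen hwprod using hword
  -- padded words of length exactly n
  set w' : Big → List (Ω × Ω) :=
    fun s => w s ++ List.replicate (n - (w s).length) (rep s, rep s) with hw'def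
  have hw'len : ∀ s : Big, (w' s).length = n := by
    intro s
    have := hwlen s
    simp only [hw'def, List.length_append, List.length_replicate]
    omega
  have hw'mem : ∀ s : Big, ∀ z ∈ w' s, z.1 ∈ (s : Set Ω) ∧ z.2 ∈ (s : Set Ω) := by
    intro s z hz
    rw [hw'def] at hz
    rcases List.mem_append.1 hz with h | h
    · exact hwmem s z h
    · rw [List.eq_of_mem_replicate h]
      exact ⟨hrep s, hrep s⟩
  have hw'prod : ∀ s : Big, ∀ y ∈ (s : Set Ω),
      ((w' s).map (fun z => Equiv.swap z.1 z.2)).prod y = f y := by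
    intro s y hy
    rw [← hwprod s y hy, hw'def]
    simp only [List.map_append, List.prod_append, List.map_replicate, Equiv.swap_self]
    have h1 : (List.replicate (n - (w s).length) (Equiv.refl Ω)).prod = 1 := by
      rw [List.prod_replicate]
      exact one_pow _
    rw [h1, mul_one]
  -- entries
  set zat : Big → ℕ → Ω × Ω := fun s r => (w' s).getD r (rep s, rep s) with hzatdef
  have hzmem : ∀ (s : Big) (r : ℕ), (zat s r).1 ∈ (s : Set Ω) ∧ (zat s r).2 ∈ (s : Set Ω) := by
    intro s r
    simp only [hzatdef]
    by_cases h : r < (w' s).length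
    · simp only [List.getD_eq_getElem _ _ h]
      exact hw'mem s _ (List.getElem_mem h)
    · rw [List.getD_eq_default _ _ (le_of_not_gt h)]
      exact ⟨hrep s, hrep s⟩
  set idx : Big → ℕ → Fin (n + 1) × Fin (n + 1) :=
    fun s r => (lab s (zat s r).1, lab s (zat s r).2) with hidxdef
  -- partner functions
  set pm : ℕ → Fin (n + 1) × Fin (n + 1) → Bool → Ω → Ω := fun r j c x =>
    if hx : ∃ t : Big, x ∈ (t : Set Ω) then
      (if col hx.choose = c ∧ idx hx.choose r = j ∧
          (x = (zat hx.choose r).1 ∨ x = (zat hx.choose r).2)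
       then (if x = (zat hx.choose r).1 then (zat hx.choose r).2 else (zat hx.choose r).1)
       else x)
    else x with hpmdef
  have hpm_spec : ∀ r j c (t : Big), ∀ x ∈ (t : Set Ω), pm r j c x =
      if col t = c ∧ idx t r = j ∧ (x = (zat t r).1 ∨ x = (zat t r).2)
      then (if x = (zat t r).1 then (zat t r).2 else (zat t r).1) else x := by
    intro r j c t x hx
    have hx' : ∃ t' : Big, x ∈ (t' : Set Ω) := ⟨t, hx⟩
    have ht : hx'.choose = t := huniq hx'.choose hx'.choose_spec t hx
    rw [hpmdef]
    simp only [dif_pos hx', ht]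
  have hpm_out : ∀ r j c (x : Ω), ¬(∃ t : Big, x ∈ (t : Set Ω)) → pm r j c x = x := by
    intro r j c x hx
    rw [hpmdef]
    simp only [dif_neg hx]
  have hpminv : ∀ r j c, Function.Involutive (pm r j c) := by
    intro r j c x
    by_cases hx : ∃ t : Big, x ∈ (t : Set Ω)
    · obtain ⟨t, hxt⟩ := hx
      rw [hpm_spec r j c t x hxt]
      by_cases hcond : col t = c ∧ idx t r = j ∧ (x = (zat t r).1 ∨ x = (zat t r).2)
      · rw [if_pos hcond]
        obtain ⟨h1, h2, h3⟩ := hcond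
        by_cases hx1 : x = (zat t r).1
        · rw [if_pos hx1]
          rw [hpm_spec r j c t _ (hzmem t r).2, if_pos ⟨h1, h2, Or.inr rfl⟩]
          by_cases hz12 : (zat t r).2 = (zat t r).1
          · rw [if_pos hz12]
            exact hz12.trans hx1.symm
          · rw [if_neg hz12]
            exact hx1.symm
        · rw [if_neg hx1]
          have hx2 : x = (zat t r).2 := h3.resolve_left hx1
          rw [hpm_spec r j c t _ (hzmem t r).1, if_pos ⟨h1, h2, Or.inl rfl⟩, if_pos rfl]
          exact hx2.symm
      · rw [if_neg hcond, hpm_spec r j c t x hxt, if_neg hcond]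
    · rw [hpm_out r j c x hx, hpm_out r j c x hx]
  set hp : ℕ → Fin (n + 1) × Fin (n + 1) → Bool → Equiv.Perm Ω :=
    fun r j c => Function.Involutive.toPerm (pm r j c) (hpminv r j c) with hhpdef
  have hpcoe : ∀ r j c (x : Ω), hp r j c x = pm r j c x := by
    intro r j c x
    rw [hhpdef]
    rfl
  -- behavior on blocks
  have hfixother : ∀ r j c (s : Big), ¬(col s = c ∧ idx s r = j) →
      ∀ y ∈ (s : Set Ω), hp r j c y = y := by
    intro r j c s hns y hy
    rw [hpcoe, hpm_spec r j c s y hy, if_neg]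
    rintro ⟨u1, u2, _⟩
    exact hns ⟨u1, u2⟩
  have hact : ∀ r j c (s : Big), col s = c → idx s r = j → ∀ y ∈ (s : Set Ω),
      hp r j c y = Equiv.swap (zat s r).1 (zat s r).2 y := by
    intro r j c s h1 h2 y hy
    rw [hpcoe, hpm_spec r j c s y hy]
    by_cases hy1 : y = (zat s r).1
    · rw [if_pos ⟨h1, h2, Or.inl hy1⟩, if_pos hy1, hy1, Equiv.swap_apply_left]
    · by_cases hy2 : y = (zat s r).2
      · rw [if_pos ⟨h1, h2, Or.inr hy2⟩, if_neg hy1, hy2, Equiv.swap_apply_right]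
      · rw [if_neg, Equiv.swap_apply_of_ne_of_ne hy1 hy2]
        rintro ⟨_, _, h | h⟩
        · exact hy1 h
        · exact hy2 h
  -- membership in the pair-system groups
  have hpmem : ∀ r j c, hp r j c ∈ SPgrp (G j c) := by
    intro r j c
    refine mem_SPgrp.2 ⟨?_, ?_⟩
    · rintro p ⟨s, hc, a, b, ha, hb, hab, hja, hjb, rfl⟩
      rw [Set.image_pair]
      by_cases hsel : idx s r = j
      · have hza : (zat s r).1 = a := by
          apply hlab s (hzmem s r).1 ha
          have := congrArg Prod.fst hsel
          simp only [hidxdef] at this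
          rw [this, hja]
        have hzb : (zat s r).2 = b := by
          apply hlab s (hzmem s r).2 hb
          have := congrArg Prod.snd hsel
          simp only [hidxdef] at this
          rw [this, hjb]
        rw [hact r j c s hc hsel a ha, hact r j c s hc hsel b hb, hza, hzb,
          Equiv.swap_apply_left, Equiv.swap_apply_right]
        exact Set.pair_comm b a
      · rw [hfixother r j c s (fun hcon => hsel hcon.2) a ha,
          hfixother r j c s (fun hcon => hsel hcon.2) b hb]
    · intro x hx
      by_contra hne
      have hne' : hp r j c x ≠ x := hne
      by_cases hex : ∃ t : Big, x ∈ (t : Set Ω)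
      · obtain ⟨t, hxt⟩ := hex
        rw [hpcoe, hpm_spec r j c t x hxt] at hne'
        by_cases hcond : col t = c ∧ idx t r = j ∧ (x = (zat t r).1 ∨ x = (zat t r).2)
        · obtain ⟨h1, h2, h3⟩ := hcond
          rw [if_pos ⟨h1, h2, h3⟩] at hne'
          have hz12 : (zat t r).1 ≠ (zat t r).2 := by
            intro he
            rcases h3 with h | h
            · rw [if_pos h] at hne'
              exact hne' ((h.trans he).symm)
            · by_cases hx1 : x = (zat t r).1
              · rw [if_pos hx1] at hne'
                exact hne' (he.symm.trans hx1.symm)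
              · rw [if_neg hx1] at hne'
                exact hne' (he.trans h.symm)
          apply hx
          refine Set.mem_sUnion.2 ⟨{(zat t r).1, (zat t r).2},
            ⟨t, h1, (zat t r).1, (zat t r).2, (hzmem t r).1, (hzmem t r).2, hz12, ?_, ?_, rfl⟩, ?_⟩
          · have := congrArg Prod.fst h2
            simpa only [hidxdef] using this
          · have := congrArg Prod.snd h2
            simpa only [hidxdef] using this
          · rcases h3 with h | h
            · rw [h]; exact Set.mem_insert _ _
            · rw [h]; exact Set.mem_insert_iff.2 (Or.inr rfl)
        · rw [if_neg hcond] at hne'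
          exact hne' rfl
      · rw [hpcoe, hpm_out r j c x hex] at hne'
        exact hne' rfl
  -- chunks
  set JC : List ((Fin (n + 1) × Fin (n + 1)) × Bool) :=
    (Finset.univ : Finset ((Fin (n + 1) × Fin (n + 1)) × Bool)).toList with hJCdef
  set chunk : ℕ → List (Equiv.Perm Ω) := fun r => JC.map (fun jc => hp r jc.1 jc.2) with hchunkdef
  set σA : Big → ℕ → Equiv.Perm Ω := fun s r => Equiv.swap (zat s r).1 (zat s r).2 with hσAdef
  have hswapmem : ∀ (s : Big) (r : ℕ), ∀ y ∈ (s : Set Ω), σA s r y ∈ (s : Set Ω) := by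
    intro s r y hy
    rw [hσAdef]
    exact swap_mem_of_mem (hzmem s r).1 (hzmem s r).2 hy
  have hchunk : ∀ (s : Big) (r : ℕ), Rrel (s : Set Ω) (σA s r) ((chunk r).prod) := by
    intro s r
    have hmemJC : ((idx s r, col s) : (Fin (n + 1) × Fin (n + 1)) × Bool) ∈ JC := by
      rw [hJCdef]
      exact Finset.mem_toList.2 (Finset.mem_univ _)
    obtain ⟨L1, L2, hsplit⟩ := List.append_of_mem hmemJC
    have hnd : JC.Nodup := by rw [hJCdef]; exact Finset.nodup_toList _
    rw [hsplit, List.nodup_append] at hnd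
    obtain ⟨hnd1, hnd2, hdisj⟩ := hnd
    have hnotin1 : ((idx s r, col s) : (Fin (n + 1) × Fin (n + 1)) × Bool) ∉ L1 := by
      intro hmem1
      exact hdisj _ hmem1 _ List.mem_cons_self rfl
    have hnotin2 : ((idx s r, col s) : (Fin (n + 1) × Fin (n + 1)) × Bool) ∉ L2 :=
      (List.nodup_cons.1 hnd2).1
    have hfixjc : ∀ jc, jc ≠ ((idx s r, col s) : (Fin (n + 1) × Fin (n + 1)) × Bool) →
        ∀ y' ∈ (s : Set Ω), hp r jc.1 jc.2 y' = y' := by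
      intro jc hnejc y' hy'
      apply hfixother r jc.1 jc.2 s _ y' hy'
      rintro ⟨hcc, hii⟩
      exact hnejc (Prod.ext hii.symm hcc.symm)
    intro y hy
    rw [hchunkdef]
    simp only [hsplit, List.map_append, List.map_cons, List.prod_append, List.prod_cons,
      Equiv.Perm.mul_apply]
    have h2 : ((L2.map fun jc => hp r jc.1 jc.2).prod) y = y := by
      apply fixlist_pt
      intro g hg
      obtain ⟨jc, hjc, rfl⟩ := List.mem_map.1 hg
      exact hfixjc jc (fun he => hnotin2 (he ▸ hjc)) y hy
    rw [h2]
    have h3 : hp r (idx s r) (col s) y = σA s r y := by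
      rw [hσAdef]
      exact hact r (idx s r) (col s) s rfl rfl y hy
    rw [h3]
    have h4 : σA s r y ∈ (s : Set Ω) := hswapmem s r y hy
    have h5 : ((L1.map fun jc => hp r jc.1 jc.2).prod) (σA s r y) = σA s r y := by
      apply fixlist_pt
      intro g hg
      obtain ⟨jc, hjc, rfl⟩ := List.mem_map.1 hg
      exact hfixjc jc (fun he => hnotin1 (he ▸ hjc)) _ h4
    rw [h5]
    exact ⟨rfl, h4⟩
  -- the global factorisation
  have hLL : f = ((List.range n).map (fun r => (chunk r).prod)).prod := by
    apply Equiv.ext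
    intro x
    have hxA : ∃ s₀ ∈ A, x ∈ s₀ := by
      apply Set.mem_sUnion.1
      rw [hpart.2.2]
      exact Set.mem_univ x
    obtain ⟨s₀, hs₀, hxs₀⟩ := hxA
    by_cases hbig : 1 < s₀.encard
    · set s : Big := ⟨s₀, hs₀, hbig⟩ with hsdef
      have hRR : Rrel (s : Set Ω) (((List.range n).map (σA s)).prod)
          (((List.range n).map (fun r => (chunk r).prod)).prod) :=
        Rrel_listprod _ _ _ (fun r _ => hchunk s r)
      have hid : (List.range n).map (σA s) = (w' s).map (fun z => Equiv.swap z.1 z.2) := by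
        apply List.ext_getElem
        · simp [hw'len s]
        · intro i h1 h2
          simp only [List.getElem_map, List.getElem_range]
          have hlen : i < (w' s).length := by simpa using h2
          have hzi : zat s i = (w' s)[i]'hlen := by
            simp only [hzatdef]
            exact List.getD_eq_getElem _ _ hlen
          simp only [hσAdef]
          rw [hzi]
      have heq := (hRR x hxs₀).1
      rw [hid] at heq
      rw [← heq, hw'prod s x hxs₀]
    · have hfx : f x = x := by
        have h1 : f x ∈ s₀ := by
          have h2 : f x ∈ (f : Ω → Ω) '' s₀ := ⟨x, hxs₀, rfl⟩
          rwa [hfA s₀ hs₀] at h2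
        exact (Set.encard_le_one_iff.1 (not_lt.1 hbig)) _ _ h1 hxs₀
      rw [hfx]
      symm
      apply fixlist_pt
      intro g hg
      obtain ⟨r, _, rfl⟩ := List.mem_map.1 hg
      apply fixlist_pt
      intro g' hg'
      rw [hchunkdef] at hg'
      obtain ⟨jc, _, rfl⟩ := List.mem_map.1 hg'
      rw [hpcoe]
      apply hpm_out
      rintro ⟨t, hxt⟩
      have : (t : Set Ω) = s₀ := pd_eq hpart.2.1 (hBigA t) hs₀ hxt hxs₀
      have h2 := t.2.2
      rw [this] at h2
      exact hbig h2
  rw [hLL]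
  apply Subgroup.list_prod_mem
  intro g hg
  obtain ⟨r, _, rfl⟩ := List.mem_map.1 hg
  apply Subgroup.list_prod_mem
  intro g' hg'
  rw [hchunkdef] at hg'
  obtain ⟨jc, _, rfl⟩ := List.mem_map.1 hg'
  apply Subgroup.subset_closure
  exact Set.mem_iUnion.2 ⟨jc, hpmem r jc.1 jc.2⟩

lemma pairsys_of_memQ {B : Set (Set Ω)} (hB : MemQ B) :
    ∃ Q : Set (Set Ω), IsPairSys Q ∧ Q.Infinite ∧ ∀ q ∈ Q, ∃ t ∈ B, q ⊆ t := by
  obtain ⟨hpart, _, hinf⟩ := hB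
  set BigB : Set (Set Ω) := {t | t ∈ B ∧ 1 < t.encard} with hBig
  have hab : ∀ t : BigB, ∃ a b : Ω, a ∈ (t : Set Ω) ∧ b ∈ (t : Set Ω) ∧ a ≠ b := by
    intro t
    exact Set.one_lt_encard_iff.1 t.2.2
  choose a b hamem hbmem hne using hab
  haveI : Infinite BigB := Set.infinite_coe_iff.2 hinf
  have hpairsub : ∀ t : BigB, ({a t, b t} : Set Ω) ⊆ (t : Set Ω) := by
    intro t x hx
    rcases hx with h | h
    · rw [h]; exact hamem t
    · rw [Set.mem_singleton_iff.1 h]; exact hbmem t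
  have hinj : Function.Injective (fun t : BigB => ({a t, b t} : Set Ω)) := by
    intro t1 t2 h
    simp only at h
    have h1 : a t1 ∈ ({a t2, b t2} : Set Ω) := by rw [← h]; exact Set.mem_insert _ _
    exact Subtype.ext (pd_eq hpart.2.1 t1.2.1 t2.2.1 (hamem t1) (hpairsub t2 h1))
  refine ⟨Set.range (fun t : BigB => ({a t, b t} : Set Ω)), ⟨?_, ?_⟩, ?_, ?_⟩
  · rintro p ⟨t, rfl⟩
    exact Set.encard_pair (hne t)
  · rintro p1 ⟨t1, rfl⟩ p2 ⟨t2, rfl⟩ hnep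
    show Disjoint ({a t1, b t1} : Set Ω) ({a t2, b t2} : Set Ω)
    rw [Set.disjoint_left]
    intro x hx1 hx2
    have ht : t1 = t2 :=
      Subtype.ext (pd_eq hpart.2.1 t1.2.1 t2.2.1 (hpairsub t1 hx1) (hpairsub t2 hx2))
    exact hnep (by rw [ht])
  · exact Set.infinite_range_of_injective hinj
  · rintro q ⟨t, rfl⟩
    exact ⟨(t : Set Ω), t.2.1, hpairsub t⟩

lemma precf_main [Countable Ω] {A B : Set (Set Ω)} (hA : MemQ A) (hB : MemQ B) :
    PrecF (SAgrp A) (SAgrp B) := by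
  classical
  obtain ⟨n, G, hG, hle⟩ := schedule hA
  obtain ⟨Q, hQps, hQinf, hQsub⟩ := pairsys_of_memQ hB
  have hconj : ∀ jc : (Fin n × Fin n) × Bool, ∃ φ : Equiv.Perm Ω,
      ∀ f ∈ SPgrp (G jc.1 jc.2), φ * f * φ⁻¹ ∈ SPgrp Q := fun jc =>
    conj_mem (hG jc.1 jc.2).1 hQps (hG jc.1 jc.2).2.1 hQinf
  choose φ hφ using hconj
  refine ⟨Set.range φ, Set.finite_range φ, ?_⟩
  refine le_trans hle ((Subgroup.closure_le _).2 ?_)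
  intro g hg
  obtain ⟨jc, hgj⟩ := Set.mem_iUnion.1 hg
  have h1 : φ jc ∈ Subgroup.closure ((SAgrp B : Set (Equiv.Perm Ω)) ∪ Set.range φ) :=
    Subgroup.subset_closure (Or.inr ⟨jc, rfl⟩)
  have h2 : φ jc * g * (φ jc)⁻¹ ∈
      Subgroup.closure ((SAgrp B : Set (Equiv.Perm Ω)) ∪ Set.range φ) :=
    Subgroup.subset_closure (Or.inl (SPgrp_le_SAgrp hB.1 hQsub (hφ jc g hgj)))
  have h3 : g = (φ jc)⁻¹ * (φ jc * g * (φ jc)⁻¹) * φ jc := by group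
  rw [h3]
  exact Subgroup.mul_mem _ (Subgroup.mul_mem _ (Subgroup.inv_mem _ h1) h2) h1

end BS

/-- (26) of Section 7: the subgroups `S_(A)`, `A ∈ 𝒬`, are mutually
`≈`-equivalent. -/
theorem stmt11 {Ω : Type u} [Countable Ω] [Infinite Ω] (A B : Set (Set Ω))
    (hA : MemQ A) (hB : MemQ B) : ApproxF (SAgrp A) (SAgrp B) :=
  ⟨BS.precf_main hA hB, BS.precf_main hB hA⟩
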